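/- For each \(k \ge 0\), the set \(X_n^{(k)}\) of permutations of \(\mathfrak{S}_n\) having at most \(k\) consecutive pairs of left-to-right minima (with sentinel 0) is a lower ideal of the left weak order, and \(|X_n^{(k)}|\) equals the number of permutations of \(\mathfrak{S}_n\) with at most \(k\) fixed points, i.e., \(\sum_{j=0}^{k} d_{n,j}\). -/

import Mathlib

open Equiv

variable {n : ℕ}

/-- The one-line word of `σ` extended by the sentinel `0`. -/
def word (σ : Perm (Fin n)) (i : ℕ) : ℕ :=
  if h : i < n then ((σ ⟨i, h⟩ : ℕ) + 1) else 0

/-- Position `i` of `σ·0` is a left-to-right minimum. -/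
def IsLRMin (σ : Perm (Fin n)) (i : ℕ) : Prop :=
  ∀ j < i, word σ i < word σ j

/-- The number of adjacent pairs of positions of `σ·0` that are both LR-minima. -/
noncomputable def pairCount (σ : Perm (Fin n)) : ℕ :=
  Set.ncard {i : ℕ | i + 1 ≤ n ∧ IsLRMin σ i ∧ IsLRMin σ (i + 1)}

/-- The number of inversions of `σ`. -/
noncomputable def invCount (σ : Perm (Fin n)) : ℕ :=
  Nat.card {p : Fin n × Fin n // p.1 < p.2 ∧ σ p.2 < σ p.1}

/-- Covering relation of the left weak order. -/
def WeakCover (σ τ : Perm (Fin n)) : Prop :=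
  ∃ (i : ℕ) (h : i + 1 < n),
    τ = Equiv.swap (⟨i, Nat.lt_of_succ_lt h⟩ : Fin n) ⟨i + 1, h⟩ * σ ∧
    invCount τ = invCount σ + 1

/-- The left weak order on `𝔖_n`. -/
def WeakLe (π σ : Perm (Fin n)) : Prop := Relation.ReflTransGen WeakCover π σ

/-- The number of permutations of `{1,…,n}` with exactly `j` fixed points. -/
noncomputable def fixCount (n j : ℕ) : ℕ :=
  Nat.card {σ : Perm (Fin n) // Nat.card {i : Fin n // σ i = i} = j}

attribute [local instance] Classical.propDecidable

theorem Equiv.Perm.apply_inv_self {α : Type*} (f : Perm α) (x : α) : f (f⁻¹ x) = x :=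
  f.apply_symm_apply x

theorem Equiv.Perm.inv_apply_self {α : Type*} (f : Perm α) (x : α) : f⁻¹ (f x) = x :=
  f.symm_apply_apply x

section basics
variable (σ : Perm (Fin n))

lemma word_lt {i : ℕ} (hi : i < n) : word σ i = (σ ⟨i, hi⟩ : ℕ) + 1 := dif_pos hi

lemma lrmin_zero : IsLRMin σ 0 := fun j hj => absurd hj (Nat.not_lt_zero j)

lemma lrmin_sentinel : IsLRMin σ n := by
  intro j hj
  rw [word, dif_neg (lt_irrefl n), word, dif_pos hj]
  omega

lemma lrmin_val_lt {p q : ℕ} (hp : p < n) (hq : q < n) (hpq : p < q)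
    (hLq : IsLRMin σ q) : (σ ⟨q, hq⟩ : ℕ) < σ ⟨p, hp⟩ := by
  have := hLq p hpq
  rwa [word_lt σ hq, word_lt σ hp, Nat.add_lt_add_iff_right] at this

noncomputable def start (σ : Perm (Fin n)) (r : ℕ) : ℕ :=
  Nat.findGreatest (IsLRMin σ) r

lemma start_le (r : ℕ) : start σ r ≤ r := Nat.findGreatest_le r

lemma lrmin_start (r : ℕ) : IsLRMin σ (start σ r) :=
  Nat.findGreatest_spec (Nat.zero_le r) (lrmin_zero σ)

lemma le_start {p r : ℕ} (hpr : p ≤ r) (hp : IsLRMin σ p) : p ≤ start σ r :=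
  Nat.le_findGreatest hpr hp

lemma start_max {p r : ℕ} (h1 : start σ r < p) (h2 : p ≤ r) : ¬ IsLRMin σ p :=
  Nat.findGreatest_is_greatest h1 h2

lemma start_of_lrmin {r : ℕ} (h : IsLRMin σ r) : start σ r = r :=
  le_antisymm (start_le σ r) (le_start σ le_rfl h)

lemma start_succ_of_not {r : ℕ} (h : ¬ IsLRMin σ (r+1)) : start σ (r+1) = start σ r := by
  unfold start
  rw [Nat.findGreatest_succ, if_neg h]

lemma start_lt (r : ℕ) (hr : r < n) : start σ r < n := lt_of_le_of_lt (start_le σ r) hr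

/-- prefix minimum fact -/
lemma start_min {r : ℕ} (hr : r < n) : ∀ j, ∀ hj : j ≤ r,
    (σ ⟨start σ r, start_lt σ r hr⟩ : ℕ) ≤ σ ⟨j, lt_of_le_of_lt hj hr⟩ := by
  intro j
  induction j using Nat.strong_induction_on with
  | _ j IH =>
    intro hj
    rcases lt_trichotomy j (start σ r) with h | h | h
    · exact le_of_lt (lrmin_val_lt σ (lt_of_le_of_lt hj hr) (start_lt σ r hr) h (lrmin_start σ r))
    · simp [h]
    · by_contra hc
      push_neg at hc
      have hLj : IsLRMin σ j := by
        intro j' hj'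
        have hj'n : j' < n := lt_of_le_of_lt (le_trans (le_of_lt hj') hj) hr
        rw [word_lt σ (lt_of_le_of_lt hj hr), word_lt σ hj'n]
        have h2 : (σ ⟨start σ r, start_lt σ r hr⟩ : ℕ) ≤ σ ⟨j', hj'n⟩ :=
          IH j' hj' (le_trans (le_of_lt hj') hj)
        omega
      exact start_max σ h hj hLj

end basics

section foata
variable (σ : Perm (Fin n))

noncomputable def foata (σ : Perm (Fin n)) : Fin n → Fin n := fun r =>
  if h : r.1 + 1 < n ∧ ¬ IsLRMin σ (r.1 + 1) then ⟨r.1 + 1, h.1⟩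
  else ⟨start σ r.1, start_lt σ r.1 r.isLt⟩

lemma foata_of_not {r : Fin n} (h1 : r.1 + 1 < n) (h2 : ¬ IsLRMin σ (r.1 + 1)) :
    foata σ r = ⟨r.1 + 1, h1⟩ := dif_pos ⟨h1, h2⟩

lemma foata_of_lrmin {r : Fin n} (h2 : IsLRMin σ (r.1 + 1)) :
    foata σ r = ⟨start σ r.1, start_lt σ r.1 r.isLt⟩ := by
  apply dif_neg
  rintro ⟨-, h⟩
  exact h h2

lemma lrmin_succ_total {r : Fin n} (h : ¬ (r.1 + 1 < n ∧ ¬ IsLRMin σ (r.1 + 1))) :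
    IsLRMin σ (r.1 + 1) := by
  by_cases hn : r.1 + 1 < n
  · by_contra hL
    exact h ⟨hn, hL⟩
  · have : r.1 + 1 = n := by have := r.isLt; omega
    rw [this]
    exact lrmin_sentinel σ

/-- the "last element of its factor" characterization -/
lemma foata_fix_iff (r : Fin n) :
    foata σ r = r ↔ IsLRMin σ r.1 ∧ IsLRMin σ (r.1 + 1) := by
  constructor
  · intro h
    unfold foata at h
    split_ifs at h with hc
    · exact absurd (congrArg Fin.val h) (by simp)
    · have h1 : start σ r.1 = r.1 := congrArg Fin.val h
      refine ⟨h1 ▸ lrmin_start σ r.1, lrmin_succ_total σ hc⟩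
  · rintro ⟨h1, h2⟩
    rw [foata_of_lrmin σ h2]
    exact Fin.ext (start_of_lrmin σ h1)

lemma foata_injective : Function.Injective (foata σ) := by
  intro r s h
  unfold foata at h
  split_ifs at h with h1 h2 h2
  · exact Fin.ext (by have := congrArg Fin.val h; simpa using this)
  · -- r ↦ r+1 (not LRmin), s ↦ start s (LRmin): values differ
    exfalso
    have hv : r.1 + 1 = start σ s.1 := congrArg Fin.val h
    exact h1.2 (hv ▸ lrmin_start σ s.1)
  · exfalso
    have hv : start σ r.1 = s.1 + 1 := congrArg Fin.val h
    exact h2.2 (hv ▸ lrmin_start σ r.1)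
  · -- both map to start
    have hv : start σ r.1 = start σ s.1 := congrArg Fin.val h
    have hr2 := lrmin_succ_total σ h1
    have hs2 := lrmin_succ_total σ h2
    -- r and s are both last elements of factor starting at p
    rcases lt_trichotomy r.1 s.1 with hlt | heq | hlt
    · exfalso
      have h3 : r.1 + 1 ≤ s.1 := hlt
      have h4 : r.1 + 1 < n := lt_of_le_of_lt h3 s.isLt
      have h5 : r.1 + 1 ≤ start σ s.1 := le_start σ h3 hr2
      rw [← hv] at h5
      exact absurd (start_le σ r.1) (by omega)
    · exact Fin.ext heq
    · exfalso
      have h3 : s.1 + 1 ≤ r.1 := hlt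
      have h4 : s.1 + 1 ≤ start σ r.1 := le_start σ h3 hs2
      rw [hv] at h4
      exact absurd (start_le σ s.1) (by omega)

noncomputable def foataPerm (σ : Perm (Fin n)) : Perm (Fin n) :=
  Equiv.ofBijective (foata σ) (Finite.injective_iff_bijective.1 (foata_injective σ))

@[simp] lemma foataPerm_apply (r : Fin n) : foataPerm σ r = foata σ r := rfl

/-- start is invariant along foata orbits -/
lemma start_foata (r : Fin n) : start σ (foata σ r).1 = start σ r.1 := by
  unfold foata
  split_ifs with h
  · exact start_succ_of_not σ h.2
  · exact start_of_lrmin σ (lrmin_start σ r.1)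

lemma start_foata_pow (k : ℕ) (r : Fin n) :
    start σ ((foataPerm σ ^ k) r).1 = start σ r.1 := by
  induction k with
  | zero => rfl
  | succ k IH =>
    rw [pow_succ', Perm.mul_apply]
    rw [show ((foataPerm σ) ((foataPerm σ ^ k) r)) = foata σ ((foataPerm σ ^ k) r) from rfl,
      start_foata]
    exact IH

lemma sameCycle_start (r : Fin n) :
    (foataPerm σ).SameCycle ⟨start σ r.1, start_lt σ r.1 r.isLt⟩ r := by
  obtain ⟨m, hm⟩ : ∃ m : ℕ, m < n ∧ True := ⟨r.1, r.isLt, trivial⟩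
  clear hm
  -- induction on r.1
  rcases r with ⟨m, hmn⟩
  induction m with
  | zero =>
    have : start σ 0 = 0 := Nat.le_zero.1 (start_le σ 0)
    simp only [this]
    exact Perm.SameCycle.refl _ _
  | succ m IH =>
    by_cases hL : IsLRMin σ (m + 1)
    · have : start σ (m+1) = m+1 := start_of_lrmin σ hL
      simp only [this]
      exact Perm.SameCycle.refl _ _
    · have hmn' : m < n := by omega
      have h1 : start σ (m+1) = start σ m := start_succ_of_not σ hL
      have h2 : foataPerm σ ⟨m, hmn'⟩ = ⟨m+1, hmn⟩ := foata_of_not σ hmn hL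
      have := (IH hmn')
      simp only [h1]
      have h3 : (foataPerm σ).SameCycle ⟨start σ m, start_lt σ m hmn'⟩ (foataPerm σ ⟨m, hmn'⟩) :=
        (Perm.sameCycle_apply_right).2 this
      rwa [h2] at h3

lemma sameCycle_start_eq {r s : Fin n} (h : (foataPerm σ).SameCycle r s) :
    start σ r.1 = start σ s.1 := by
  obtain ⟨k, -, hk⟩ := h.exists_pow_eq'
  rw [← hk, start_foata_pow]

end foata

section phi
variable (σ : Perm (Fin n))

noncomputable def Phi (σ : Perm (Fin n)) : Perm (Fin n) := σ * foataPerm σ * σ⁻¹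

lemma Phi_apply (x : Fin n) : Phi σ x = σ (foata σ (σ⁻¹ x)) := rfl

lemma Phi_apply' (r : Fin n) : Phi σ (σ r) = σ (foata σ r) := by
  rw [Phi_apply, Perm.inv_apply_self]

lemma sameCycle_Phi {a b : Fin n} :
    (Phi σ).SameCycle (σ a) (σ b) ↔ (foataPerm σ).SameCycle a b := by
  unfold Phi
  rw [Perm.sameCycle_conj]
  simp

/-- cycle minimum predicate -/
def CycMin (τ : Perm (Fin n)) (x : Fin n) : Prop := ∀ y, τ.SameCycle x y → x ≤ y

lemma cycMin_of_lrmin {q : ℕ} (hq : q < n) (hL : IsLRMin σ q) :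
    CycMin (Phi σ) (σ ⟨q, hq⟩) := by
  intro y hy
  have hy' : (Phi σ).SameCycle (σ ⟨q, hq⟩) (σ (σ⁻¹ y)) := by
    rwa [Perm.apply_inv_self]
  rw [sameCycle_Phi] at hy'
  have hstart := sameCycle_start_eq σ hy'
  have hq' : start σ q = q := start_of_lrmin σ hL
  rw [hq'] at hstart
  have hmin : (σ ⟨start σ (σ⁻¹ y).1, start_lt σ _ (σ⁻¹ y).isLt⟩ : ℕ) ≤ σ ⟨(σ⁻¹ y).1, (σ⁻¹ y).isLt⟩ :=
    start_min σ (σ⁻¹ y).isLt (σ⁻¹ y).1 le_rfl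
  have he1 : (⟨start σ (σ⁻¹ y).1, start_lt σ _ (σ⁻¹ y).isLt⟩ : Fin n) = ⟨q, hq⟩ :=
    Fin.ext hstart.symm
  have he2 : (⟨(σ⁻¹ y).1, (σ⁻¹ y).isLt⟩ : Fin n) = σ⁻¹ y := Fin.eta _ _
  rw [he1, he2, Perm.apply_inv_self] at hmin
  exact hmin

lemma cycMin_eq {x : Fin n} (h : CycMin (Phi σ) x) :
    x = σ ⟨start σ (σ⁻¹ x).1, start_lt σ _ (σ⁻¹ x).isLt⟩ ∧ IsLRMin σ (start σ (σ⁻¹ x).1) := by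
  have h1 : (foataPerm σ).SameCycle ⟨start σ (σ⁻¹ x).1, start_lt σ _ (σ⁻¹ x).isLt⟩ (σ⁻¹ x) :=
    sameCycle_start σ (σ⁻¹ x)
  have h2 : (Phi σ).SameCycle (σ ⟨start σ (σ⁻¹ x).1, start_lt σ _ (σ⁻¹ x).isLt⟩) (σ (σ⁻¹ x)) :=
    (sameCycle_Phi σ).2 h1
  rw [Perm.apply_inv_self] at h2
  have h3 : x ≤ σ ⟨start σ (σ⁻¹ x).1, start_lt σ _ (σ⁻¹ x).isLt⟩ := h _ h2.symm
  have h4 : (σ ⟨start σ (σ⁻¹ x).1, start_lt σ _ (σ⁻¹ x).isLt⟩ : ℕ) ≤ σ ⟨(σ⁻¹ x).1, (σ⁻¹ x).isLt⟩ :=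
    start_min σ (σ⁻¹ x).isLt (σ⁻¹ x).1 le_rfl
  rw [Fin.eta, Perm.apply_inv_self] at h4
  exact ⟨le_antisymm h3 h4, lrmin_start σ _⟩

lemma cycMin_iff {x : Fin n} : CycMin (Phi σ) x ↔ IsLRMin σ (σ⁻¹ x).1 := by
  constructor
  · intro h
    obtain ⟨h1, h2⟩ := cycMin_eq σ h
    have h3 : σ⁻¹ x = ⟨start σ (σ⁻¹ x).1, start_lt σ _ (σ⁻¹ x).isLt⟩ := by
      conv_lhs => rw [h1]
      exact Perm.inv_apply_self σ _
    rw [show (σ⁻¹ x).1 = start σ (σ⁻¹ x).1 from congrArg Fin.val h3]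
    exact h2
  · intro h
    have := cycMin_of_lrmin σ (σ⁻¹ x).isLt h
    rw [Fin.eta, Perm.apply_inv_self] at this
    exact this

end phi

section reconstruct
variable (σ : Perm (Fin n))

noncomputable def pmin (σ : Perm (Fin n)) (hn : 0 < n) (r : ℕ) : Fin n :=
  (Finset.image σ ((Finset.univ : Finset (Fin n)).filter (fun j => j.1 ≤ r))).min'
    (Finset.Nonempty.image ⟨⟨0, hn⟩, by simp⟩ σ)

lemma pmin_eq (hn : 0 < n) {r : ℕ} (hr : r < n) :
    pmin σ hn r = σ ⟨start σ r, start_lt σ r hr⟩ := by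
  apply le_antisymm
  · apply Finset.min'_le
    apply Finset.mem_image_of_mem
    simp [start_le σ r]
  · apply Finset.le_min'
    intro y hy
    obtain ⟨j, hj, rfl⟩ := Finset.mem_image.1 hy
    have hj' : j.1 ≤ r := by simpa using hj
    have := start_min σ hr j.1 hj'
    rw [Fin.le_def]
    simpa using this

lemma sigma_zero_cycMin (hn : 0 < n) : CycMin (Phi σ) (σ ⟨0, hn⟩) :=
  cycMin_of_lrmin σ hn (lrmin_zero σ)

lemma sigma_zero_max (hn : 0 < n) {x : Fin n} (hx : CycMin (Phi σ) x) : x ≤ σ ⟨0, hn⟩ := by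
  obtain ⟨h1, h2⟩ := cycMin_eq σ hx
  rcases Nat.eq_zero_or_pos (start σ (σ⁻¹ x).1) with h | h
  · rw [h1]
    exact le_of_eq (by congr 1; exact Fin.ext h)
  · rw [h1]
    exact le_of_lt (Fin.lt_def.2 (lrmin_val_lt σ hn (start_lt σ _ (σ⁻¹ x).isLt) h h2))

lemma disc_iff (hn : 0 < n) {r : ℕ} (hr1 : r + 1 < n) :
    IsLRMin σ (r + 1) ↔
      Phi σ (σ ⟨r, Nat.lt_of_succ_lt hr1⟩) = pmin σ hn r := by
  have hr : r < n := Nat.lt_of_succ_lt hr1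
  rw [pmin_eq σ hn hr, Phi_apply']
  constructor
  · intro hL
    rw [foata_of_lrmin σ (r := ⟨r, hr⟩) hL]
  · intro h
    by_contra hL
    rw [foata_of_not σ (r := ⟨r, hr⟩) hr1 hL] at h
    have := σ.injective h
    have : r + 1 = start σ r := congrArg Fin.val this
    have := start_le σ r
    omega

lemma stepA {r : ℕ} (hr1 : r + 1 < n) (hL : ¬ IsLRMin σ (r + 1)) :
    σ ⟨r + 1, hr1⟩ = Phi σ (σ ⟨r, Nat.lt_of_succ_lt hr1⟩) := by
  rw [Phi_apply', foata_of_not σ (r := ⟨r, Nat.lt_of_succ_lt hr1⟩) hr1 hL]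

lemma stepB (hn : 0 < n) {r : ℕ} (hr1 : r + 1 < n) (hL : IsLRMin σ (r + 1)) :
    CycMin (Phi σ) (σ ⟨r + 1, hr1⟩) ∧
    σ ⟨r + 1, hr1⟩ < pmin σ hn r ∧
    (∀ x, CycMin (Phi σ) x → x < pmin σ hn r → x ≤ σ ⟨r + 1, hr1⟩) := by
  have hr : r < n := Nat.lt_of_succ_lt hr1
  rw [pmin_eq σ hn hr]
  refine ⟨cycMin_of_lrmin σ hr1 hL, ?_, ?_⟩
  · exact Fin.lt_def.2 (lrmin_val_lt σ (start_lt σ r hr) hr1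
      (Nat.lt_succ_of_le (start_le σ r)) hL)
  · intro x hx hxm
    obtain ⟨h1, h2⟩ := cycMin_eq σ hx
    have hqn : start σ (σ⁻¹ x).1 < n := start_lt σ _ (σ⁻¹ x).isLt
    have hxq : x = σ ⟨start σ (σ⁻¹ x).1, hqn⟩ := h1
    have hqr : r + 1 ≤ start σ (σ⁻¹ x).1 := by
      by_contra hc
      push_neg at hc
      have hqr' : start σ (σ⁻¹ x).1 ≤ r := by omega
      rcases lt_trichotomy (start σ (σ⁻¹ x).1) (start σ r) with h | h | h
      · have hv := lrmin_val_lt σ hqn (start_lt σ r hr) h (lrmin_start σ r)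
        have : x < x := by
          calc x < σ ⟨start σ r, start_lt σ r hr⟩ := hxm
          _ < x := by rw [hxq]; exact Fin.lt_def.2 hv
        exact lt_irrefl x this
      · have hxe : x = σ ⟨start σ r, start_lt σ r hr⟩ := by
          rw [hxq]; congr 1; exact Fin.ext h
        rw [← hxe] at hxm
        exact lt_irrefl x hxm
      · exact start_max σ h hqr' h2
    rcases Nat.eq_or_lt_of_le hqr with h | h
    · rw [hxq]
      exact le_of_eq (by congr 1; exact Fin.ext h.symm)
    · rw [hxq]
      exact le_of_lt (Fin.lt_def.2 (lrmin_val_lt σ hr1 hqn h h2))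

end reconstruct

section inj

lemma pmin_congr (σ π : Perm (Fin n)) (hn : 0 < n) (r : ℕ)
    (h : ∀ j : Fin n, j.1 ≤ r → σ j = π j) : pmin σ hn r = pmin π hn r := by
  unfold pmin
  congr 1
  apply Finset.image_congr
  intro a ha
  exact h a (by simpa using ha)

theorem Phi_injective : Function.Injective (Phi : Perm (Fin n) → Perm (Fin n)) := by
  intro σ π h
  have key : ∀ m : ℕ, ∀ hm : m < n, σ ⟨m, hm⟩ = π ⟨m, hm⟩ := by
    intro m
    induction m using Nat.strong_induction_on with
    | _ m IH =>
      intro hm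
      match m with
      | 0 =>
        apply le_antisymm
        · exact sigma_zero_max π hm (h ▸ sigma_zero_cycMin σ hm)
        · exact sigma_zero_max σ hm (h.symm ▸ sigma_zero_cycMin π hm)
      | r + 1 =>
        have hn : 0 < n := Nat.lt_of_le_of_lt (Nat.zero_le _) hm
        have hr : r < n := Nat.lt_of_succ_lt hm
        have hpm : pmin σ hn r = pmin π hn r :=
          pmin_congr σ π hn r (fun j hj => by
            have : σ ⟨j.1, j.isLt⟩ = π ⟨j.1, j.isLt⟩ := IH j.1 (by omega) j.isLt
            simpa using this)
        have hval : σ ⟨r, hr⟩ = π ⟨r, hr⟩ := IH r (by omega) hr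
        have hdisc : IsLRMin σ (r + 1) ↔ IsLRMin π (r + 1) := by
          rw [disc_iff σ hn hm, disc_iff π hn hm, h, hval, hpm]
        by_cases hL : IsLRMin σ (r + 1)
        · obtain ⟨hc1, hlt1, hmax1⟩ := stepB σ hn hm hL
          obtain ⟨hc2, hlt2, hmax2⟩ := stepB π hn hm (hdisc.1 hL)
          apply le_antisymm
          · exact hmax2 _ (h ▸ hc1) (by rw [← hpm]; exact hlt1)
          · exact hmax1 _ (h.symm ▸ hc2) (hpm.symm ▸ hlt2)
        · rw [stepA σ hm hL, stepA π hm ((not_iff_not.2 hdisc).1 hL), h, hval]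
  ext x
  have := key x.1 x.isLt
  rw [Fin.eta] at this
  rw [this]

end inj

section count
variable (σ : Perm (Fin n))

noncomputable def fixEquiv :
    {x : Fin n // Phi σ x = x} ≃ {i : ℕ | i + 1 ≤ n ∧ IsLRMin σ i ∧ IsLRMin σ (i + 1)} where
  toFun x := ⟨(σ⁻¹ x.1).1, by
    have hx := x.2
    rw [show x.1 = σ (σ⁻¹ x.1) from (Perm.apply_inv_self σ x.1).symm, Phi_apply'] at hx
    have hfix : foata σ (σ⁻¹ x.1) = σ⁻¹ x.1 := σ.injective hx
    rw [foata_fix_iff] at hfix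
    exact ⟨(σ⁻¹ x.1).isLt, hfix⟩⟩
  invFun i := ⟨σ ⟨i.1, Nat.lt_of_succ_le i.2.1⟩, by
    rw [Phi_apply', (foata_fix_iff σ _).2 ⟨i.2.2.1, i.2.2.2⟩]⟩
  left_inv x := Subtype.ext (by simp)
  right_inv i := Subtype.ext (by simp)

lemma phi_fix_card : Nat.card {x : Fin n // Phi σ x = x} = pairCount σ := by
  rw [pairCount, ← Nat.card_coe_set_eq]
  exact Nat.card_congr (fixEquiv σ)

lemma card_le_eq_sum {α : Type*} [Fintype α] (g : α → ℕ) (k : ℕ) :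
    Nat.card {a : α // g a ≤ k} = ∑ j ∈ Finset.range (k + 1), Nat.card {a : α // g a = j} := by
  classical
  rw [Nat.card_eq_fintype_card, Fintype.card_subtype]
  rw [Finset.card_eq_sum_card_fiberwise (f := g) (t := Finset.range (k + 1))
    (fun x hx => Finset.mem_range.2 (Nat.lt_succ_of_le ((Finset.mem_filter.1 hx).2)))]
  apply Finset.sum_congr rfl
  intro j hj
  rw [Nat.card_eq_fintype_card, Fintype.card_subtype]
  congr 1
  ext a
  simp only [Finset.mem_filter, Finset.mem_univ, true_and]
  have := Finset.mem_range.1 hj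
  constructor
  · rintro ⟨-, h⟩; exact h
  · intro h; exact ⟨by omega, h⟩

theorem main_count (k : ℕ) :
    Nat.card {σ : Perm (Fin n) // pairCount σ ≤ k} =
      ∑ j ∈ Finset.range (k + 1),
        Nat.card {σ : Perm (Fin n) // Nat.card {i : Fin n // σ i = i} = j} := by
  classical
  have hbij : Function.Bijective (Phi : Perm (Fin n) → Perm (Fin n)) :=
    Finite.injective_iff_bijective.1 Phi_injective
  have e : {σ : Perm (Fin n) // pairCount σ ≤ k} ≃
      {τ : Perm (Fin n) // Nat.card {i : Fin n // τ i = i} ≤ k} :=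
    Equiv.subtypeEquiv (Equiv.ofBijective _ hbij) (fun σ => by
      simp only [Equiv.ofBijective_apply]
      rw [phi_fix_card σ])
  rw [Nat.card_congr e, card_le_eq_sum]

end count

section weak

variable {i : ℕ} (h : i + 1 < n) (σ : Perm (Fin n))

lemma swap_lt_iff {i : ℕ} (h : i + 1 < n) {u v : Fin n}
    (h1 : ¬(u = ⟨i, Nat.lt_of_succ_lt h⟩ ∧ v = ⟨i + 1, h⟩))
    (h2 : ¬(u = ⟨i + 1, h⟩ ∧ v = ⟨i, Nat.lt_of_succ_lt h⟩)) :
    Equiv.swap (⟨i, Nat.lt_of_succ_lt h⟩ : Fin n) ⟨i + 1, h⟩ v <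
      Equiv.swap (⟨i, Nat.lt_of_succ_lt h⟩ : Fin n) ⟨i + 1, h⟩ u ↔ v < u := by
  simp only [Equiv.swap_apply_def]
  split_ifs <;> (simp only [Fin.lt_def, Fin.ext_iff] at *) <;> omega

lemma invCount_swap {i : ℕ} (h : i + 1 < n) (σ : Perm (Fin n))
    (hpq : σ⁻¹ ⟨i, Nat.lt_of_succ_lt h⟩ < σ⁻¹ ⟨i + 1, h⟩) :
    invCount (Equiv.swap (⟨i, Nat.lt_of_succ_lt h⟩ : Fin n) ⟨i + 1, h⟩ * σ) =
      invCount σ + 1 := by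
  classical
  set a : Fin n := ⟨i, Nat.lt_of_succ_lt h⟩ with ha
  set b : Fin n := ⟨i + 1, h⟩ with hb
  set τ := Equiv.swap a b * σ with hτ
  have hτapp : ∀ x, τ x = Equiv.swap a b (σ x) := fun x => rfl
  unfold invCount
  rw [Nat.card_eq_fintype_card, Nat.card_eq_fintype_card, Fintype.card_subtype,
    Fintype.card_subtype]
  have hset : (Finset.univ.filter fun p : Fin n × Fin n => p.1 < p.2 ∧ τ p.2 < τ p.1) =
      insert (σ⁻¹ a, σ⁻¹ b)
        (Finset.univ.filter fun p : Fin n × Fin n => p.1 < p.2 ∧ σ p.2 < σ p.1) := by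
    ext ⟨x, y⟩
    simp only [Finset.mem_filter, Finset.mem_univ, true_and, Finset.mem_insert, Prod.mk.injEq]
    constructor
    · rintro ⟨hxy, hlt⟩
      by_cases c1 : σ x = a ∧ σ y = b
      · left
        exact ⟨by rw [← c1.1, Perm.inv_apply_self], by rw [← c1.2, Perm.inv_apply_self]⟩
      · by_cases c2 : σ x = b ∧ σ y = a
        · exfalso
          have hx : x = σ⁻¹ b := by rw [← c2.1, Perm.inv_apply_self]
          have hy : y = σ⁻¹ a := by rw [← c2.2, Perm.inv_apply_self]
          rw [hx, hy] at hxy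
          exact absurd (hxy.trans hpq) (lt_irrefl _)
        · right
          rw [hτapp, hτapp] at hlt
          exact ⟨hxy, (swap_lt_iff h c1 c2).1 hlt⟩
    · rintro (⟨hx, hy⟩ | ⟨hxy, hlt⟩)
      · subst hx; subst hy
        refine ⟨hpq, ?_⟩
        rw [hτapp, hτapp, Perm.apply_inv_self, Perm.apply_inv_self, Equiv.swap_apply_left,
          Equiv.swap_apply_right]
        exact Fin.lt_def.2 (Nat.lt_succ_self i)
      · refine ⟨hxy, ?_⟩
        rw [hτapp, hτapp]
        have c1 : ¬(σ x = a ∧ σ y = b) := by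
          rintro ⟨cx, cy⟩
          have : (σ y : ℕ) < σ x := hlt
          rw [cx, cy] at this
          simp [ha, hb] at this
        have c2 : ¬(σ x = b ∧ σ y = a) := by
          rintro ⟨cx, cy⟩
          have hx : x = σ⁻¹ b := by rw [← cx, Perm.inv_apply_self]
          have hy : y = σ⁻¹ a := by rw [← cy, Perm.inv_apply_self]
          rw [hx, hy] at hxy
          exact absurd (hxy.trans hpq) (lt_irrefl _)
        exact (swap_lt_iff h c1 c2).2 hlt
  rw [hset, Finset.card_insert_of_notMem]
  simp only [Finset.mem_filter, Finset.mem_univ, true_and, not_and]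
  intro hxy
  rw [Perm.apply_inv_self, Perm.apply_inv_self]
  exact not_lt.2 (le_of_lt (Fin.lt_def.2 (Nat.lt_succ_self i)))

end weak

section mono

lemma lrmin_swap_mono {i : ℕ} (h : i + 1 < n) (σ : Perm (Fin n))
    (hpq : σ⁻¹ ⟨i, Nat.lt_of_succ_lt h⟩ < σ⁻¹ ⟨i + 1, h⟩) (m : ℕ) (hm : IsLRMin σ m) :
    IsLRMin (Equiv.swap (⟨i, Nat.lt_of_succ_lt h⟩ : Fin n) ⟨i + 1, h⟩ * σ) m := by
  set a : Fin n := ⟨i, Nat.lt_of_succ_lt h⟩ with ha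
  set b : Fin n := ⟨i + 1, h⟩ with hb
  set τ := Equiv.swap a b * σ with hτdef
  have hτapp : ∀ x, τ x = Equiv.swap a b (σ x) := fun x => rfl
  obtain ⟨⟨P, hPn⟩, hPe⟩ : ∃ x : Fin n, σ⁻¹ a = x := ⟨_, rfl⟩
  obtain ⟨⟨Q, hQn⟩, hQe⟩ : ∃ x : Fin n, σ⁻¹ b = x := ⟨_, rfl⟩
  have hPQ : P < Q := by rw [hPe, hQe] at hpq; exact hpq
  have hsP : σ ⟨P, hPn⟩ = a := by rw [← hPe, Perm.apply_inv_self]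
  have hsQ : σ ⟨Q, hQn⟩ = b := by rw [← hQe, Perm.apply_inv_self]
  have hvP : (σ ⟨P, hPn⟩ : ℕ) = i := congrArg Fin.val hsP
  have hvQ : (σ ⟨Q, hQn⟩ : ℕ) = i + 1 := congrArg Fin.val hsQ
  have wσP : word σ P = i + 1 := by rw [word_lt σ hPn, hvP]
  have wσQ : word σ Q = i + 2 := by rw [word_lt σ hQn, hvQ]
  have wτP : word τ P = i + 2 := by
    rw [word_lt τ hPn, hτapp, hsP, Equiv.swap_apply_left, hb]
  have wτQ : word τ Q = i + 1 := by
    rw [word_lt τ hQn, hτapp, hsQ, Equiv.swap_apply_right, ha]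
  have wother : ∀ j, j < n → j ≠ P → j ≠ Q → word τ j = word σ j ∧
      word σ j ≠ i + 1 ∧ word σ j ≠ i + 2 := by
    intro j hjn hjP hjQ
    have hna : σ ⟨j, hjn⟩ ≠ a := by
      intro hc
      apply hjP
      have h2 : (⟨j, hjn⟩ : Fin n) = σ⁻¹ a := by rw [← hc, Perm.inv_apply_self]
      rw [hPe] at h2
      exact congrArg Fin.val h2
    have hnb : σ ⟨j, hjn⟩ ≠ b := by
      intro hc
      apply hjQ
      have h2 : (⟨j, hjn⟩ : Fin n) = σ⁻¹ b := by rw [← hc, Perm.inv_apply_self]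
      rw [hQe] at h2
      exact congrArg Fin.val h2
    refine ⟨?_, ?_, ?_⟩
    · rw [word_lt τ hjn, word_lt σ hjn, hτapp, Equiv.swap_apply_of_ne_of_ne hna hnb]
    · rw [word_lt σ hjn]
      intro hc
      exact hna (Fin.ext (show (σ ⟨j, hjn⟩ : ℕ) = i by omega))
    · rw [word_lt σ hjn]
      intro hc
      exact hnb (Fin.ext (show (σ ⟨j, hjn⟩ : ℕ) = i + 1 by omega))
  -- main case analysis
  rcases lt_trichotomy m n with hmn | hmn | hmn
  · -- m < n
    rcases eq_or_ne m Q with rfl | hmQ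
    · exfalso
      have := hm P hPQ
      omega
    rcases eq_or_ne m P with rfl | hmP
    · intro j hj
      have hjn : j < n := lt_trans hj hPn
      have hjQ : j ≠ Q := by omega
      have hjm : j ≠ m := by omega
      obtain ⟨e1, e2, e3⟩ := wother j hjn hjm hjQ
      have := hm j hj
      omega
    · intro j hj
      have hjn : j < n := lt_trans hj hmn
      obtain ⟨e1, e2, e3⟩ := wother m hmn hmP hmQ
      have hmj := hm j hj
      rcases eq_or_ne j P with rfl | hjP
      · omega
      rcases eq_or_ne j Q with rfl | hjQ
      · omega
      · obtain ⟨f1, f2, f3⟩ := wother j hjn hjP hjQ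
        omega
  · -- m = n
    rw [hmn]
    exact lrmin_sentinel τ
  · -- m > n : contradiction
    exfalso
    have h1 := hm n hmn
    have h2 : word σ m = 0 := dif_neg (by omega)
    have h3 : word σ n = 0 := dif_neg (lt_irrefl n)
    omega

lemma pairCount_cover_mono {σ τ : Perm (Fin n)}
    (hc : ∃ (i : ℕ) (h : i + 1 < n),
      τ = Equiv.swap (⟨i, Nat.lt_of_succ_lt h⟩ : Fin n) ⟨i + 1, h⟩ * σ ∧
      invCount τ = invCount σ + 1) :
    pairCount σ ≤ pairCount τ := by
  obtain ⟨i, h, hτ, hinv⟩ := hc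
  set a : Fin n := ⟨i, Nat.lt_of_succ_lt h⟩ with ha
  set b : Fin n := ⟨i + 1, h⟩ with hb
  have hab : a ≠ b := by
    intro hc'
    have : i = i + 1 := congrArg Fin.val hc'
    omega
  have hpq : σ⁻¹ a < σ⁻¹ b := by
    rcases lt_trichotomy (σ⁻¹ a) (σ⁻¹ b) with h1 | h1 | h1
    · exact h1
    · exact absurd (σ⁻¹.injective h1) hab
    · exfalso
      have hτinv : τ⁻¹ a < τ⁻¹ b := by
        have e1 : τ⁻¹ a = σ⁻¹ b := by
          rw [hτ, mul_inv_rev, Perm.mul_apply]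
          congr 1
          rw [Equiv.swap_inv, Equiv.swap_apply_left]
        have e2 : τ⁻¹ b = σ⁻¹ a := by
          rw [hτ, mul_inv_rev, Perm.mul_apply]
          congr 1
          rw [Equiv.swap_inv, Equiv.swap_apply_right]
        rw [e1, e2]
        exact h1
      have := invCount_swap h τ hτinv
      have hsw : Equiv.swap a b * τ = σ := by
        rw [hτ, ← mul_assoc, Equiv.swap_mul_self, one_mul]
      rw [hsw, hinv] at this
      omega
  have hsub : {i' : ℕ | i' + 1 ≤ n ∧ IsLRMin σ i' ∧ IsLRMin σ (i' + 1)} ⊆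
      {i' : ℕ | i' + 1 ≤ n ∧ IsLRMin τ i' ∧ IsLRMin τ (i' + 1)} := by
    rintro m ⟨h1, h2, h3⟩
    subst hτ
    exact ⟨h1, lrmin_swap_mono h σ hpq m h2, lrmin_swap_mono h σ hpq (m + 1) h3⟩
  have hfin : ({i' : ℕ | i' + 1 ≤ n ∧ IsLRMin τ i' ∧ IsLRMin τ (i' + 1)}).Finite := by
    apply Set.Finite.subset (Set.finite_Iio n)
    rintro m ⟨h1, -⟩
    exact Set.mem_Iio.2 (by omega)
  exact Set.ncard_le_ncard hsub hfin

end mono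

lemma pairCount_weakLe_mono {σ π : Perm (Fin n)} (h : WeakLe π σ) :
    pairCount π ≤ pairCount σ := by
  induction h with
  | refl => exact le_rfl
  | tail hab hbc ih => exact le_trans ih (pairCount_cover_mono hbc)

/-- The set `X_n^{(k)}` of permutations with at most `k` adjacent pairs of LR-minima in
`σ·0` is a lower ideal of the left weak order, and its cardinality is the number
`∑_{j=0}^k d_{n,j}` of permutations with at most `k` fixed points. -/
theorem stmt_12 (n k : ℕ) :
    (∀ σ π : Perm (Fin n), pairCount σ ≤ k → WeakLe π σ → pairCount π ≤ k) ∧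
    Nat.card {σ : Perm (Fin n) // pairCount σ ≤ k} =
      ∑ j ∈ Finset.range (k + 1), fixCount n j := by
  constructor
  · intro σ π hσ hle
    exact le_trans (pairCount_weakLe_mono hle) hσ
  · exact main_count k
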